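/- Let {X, S_i, p_i} be a measurable iterated function system and D ⊆ X × Σ a Borel set invariant under the skew product S(x,ω) = (S_{ω₁}(x), σω) (i.e. S⁻¹(D) = D). Then for every x ∈ X, Σ_{i∈I} p_i(x)·L_D(S_i(x)) = L_D(x), where L_D(x) = p_x(D_x), D_x = {ω : (x,ω) ∈ D}. -/

import Mathlib

open MeasureTheory Set
open scoped ENNReal NNReal

def iterWord {I X : Type*} (S : I → X → X) : List I → X → X
  | [], x => x
  | i :: l, x => iterWord S l (S i x)

def wtWord {I X : Type*} (S : I → X → X) (p : I → X → ℝ) : List I → X → ℝ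
  | [], _ => 1
  | i :: l, x => p i x * wtWord S p l (S i x)

def cylinder {I : Type*} (l : List I) : Set (ℕ → I) :=
  {ξ | ∀ (k : ℕ) (h : k < l.length), ξ k = l.get ⟨k, h⟩}

lemma cylinder_nil {I : Type*} : _root_.cylinder ([] : List I) = univ := by
  ext ξ; simp [_root_.cylinder]

lemma mem_cylinder_cons {I : Type*} (i : I) (l : List I) (ξ : ℕ → I) :
    ξ ∈ _root_.cylinder (i :: l) ↔ ξ 0 = i ∧ (fun n => ξ (n+1)) ∈ _root_.cylinder l := by
  constructor
  · intro h
    refine ⟨h 0 (by simp), fun k hk => ?_⟩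
    have := h (k+1) (by simpa using Nat.succ_lt_succ hk)
    simpa using this
  · rintro ⟨h0, h1⟩ k hk
    cases k with
    | zero => simpa using h0
    | succ k => simpa using h1 k (by simpa using Nat.lt_of_succ_lt_succ hk)

lemma cylinder_pi_system {I : Type*} : IsPiSystem {s : Set (ℕ → I) | ∃ l, s = _root_.cylinder l} := by
  rintro s ⟨l₁, rfl⟩ t ⟨l₂, rfl⟩ ⟨ξ, hξ₁, hξ₂⟩
  wlog h : l₁.length ≤ l₂.length generalizing l₁ l₂
  · rw [inter_comm]; exact this l₂ l₁ hξ₂ hξ₁ (le_of_not_ge h)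
  have hsub : _root_.cylinder l₂ ⊆ _root_.cylinder l₁ := by
    intro ω hω k hk
    have hk2 : k < l₂.length := lt_of_lt_of_le hk h
    rw [hω k hk2, ← hξ₂ k hk2, hξ₁ k hk]
  exact ⟨l₂, by rw [inter_eq_right.mpr hsub]⟩

lemma measurableSet_cylinder {I : Type*} [MeasurableSpace I] [MeasurableSingletonClass I]
    (l : List I) : MeasurableSet (_root_.cylinder l) := by
  have : _root_.cylinder l = ⋂ (k : Fin l.length), {ξ : ℕ → I | ξ k = l.get k} := by
    ext ξ; simp only [_root_.cylinder, mem_setOf_eq, mem_iInter]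
    exact ⟨fun h k => h k k.2, fun h k hk => h ⟨k, hk⟩⟩
  rw [this]
  exact MeasurableSet.iInter fun k =>
    (measurable_pi_apply (k : ℕ)) (measurableSet_singleton _)

lemma generateFrom_cylinders {I : Type*} [Fintype I] [MeasurableSpace I]
    [MeasurableSingletonClass I] :
    (inferInstance : MeasurableSpace (ℕ → I))
      = MeasurableSpace.generateFrom {s : Set (ℕ → I) | ∃ l, s = _root_.cylinder l} := by
  apply le_antisymm
  · -- pi ≤ generateFrom
    rw [show (inferInstance : MeasurableSpace (ℕ → I)) = MeasurableSpace.pi from rfl]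
    refine iSup_le fun n => ?_
    have hm : @Measurable (ℕ → I) I
        (MeasurableSpace.generateFrom {s : Set (ℕ → I) | ∃ l, s = _root_.cylinder l}) _
        (fun ξ => ξ n) := by
      refine @measurable_to_countable' I (ℕ → I) _ _
        (MeasurableSpace.generateFrom {s : Set (ℕ → I) | ∃ l, s = _root_.cylinder l})
        (fun ξ => ξ n) (fun i => ?_)
      have heq : ((fun ξ : ℕ → I => ξ n) ⁻¹' {i})
          = ⋃ f : {f : Fin (n+1) → I // f (Fin.last n) = i},
              _root_.cylinder (List.ofFn f.1) := by
        ext ξ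
        simp only [mem_preimage, mem_singleton_iff, mem_iUnion]
        constructor
        · intro h
          refine ⟨⟨fun k => ξ k, by simpa using h⟩, fun k hk => ?_⟩
          rw [List.get_eq_getElem, List.getElem_ofFn]
        · rintro ⟨⟨f, hf⟩, hξ⟩
          have h2 := hξ n (by simp)
          rw [List.get_eq_getElem, List.getElem_ofFn] at h2
          exact h2.trans hf
      rw [heq]
      exact MeasurableSet.iUnion fun f =>
        MeasurableSpace.measurableSet_generateFrom ⟨_, rfl⟩
    exact hm.comap_le
  · rw [MeasurableSpace.generateFrom_le_iff]
    rintro s ⟨l, rfl⟩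
    exact measurableSet_cylinder l

lemma wtWord_nonneg {I X : Type*} (S : I → X → X) (p : I → X → ℝ)
    (hp0 : ∀ i x, 0 ≤ p i x) : ∀ (l : List I) (x : X), 0 ≤ wtWord S p l x
  | [], _ => zero_le_one
  | i :: l, x => mul_nonneg (hp0 i x) (wtWord_nonneg S p hp0 l (S i x))

theorem stmt7' {X I : Type*}
    [MeasurableSpace X]
    [Fintype I] [MeasurableSpace I] [MeasurableSingletonClass I]
    (S : I → X → X) (hS : ∀ i, Measurable (S i))
    (p : I → X → ℝ) (hp : ∀ i, Measurable (p i))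
    (hp0 : ∀ i x, 0 ≤ p i x) (hp1 : ∀ x, ∑ i : I, p i x = 1)
    (px : X → Measure (ℕ → I)) (hpxprob : ∀ x, IsProbabilityMeasure (px x))
    (hpxcyl : ∀ (x : X) (l : List I), px x (_root_.cylinder l) = ENNReal.ofReal (wtWord S p l x))
    (D : Set (X × (ℕ → I))) (hD : MeasurableSet D)
    (hDinv : (fun z : X × (ℕ → I) => (S (z.2 0) z.1, fun n => z.2 (n + 1))) ⁻¹' D = D) :
    ∀ x : X, ∑ i : I, ENNReal.ofReal (p i x) * px (S i x) {ω | (S i x, ω) ∈ D}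
      = px x {ω | (x, ω) ∈ D} := by
  intro x
  set shift : (ℕ → I) → (ℕ → I) := fun ω n => ω (n + 1) with hshift_def
  have hshift : Measurable shift :=
    measurable_pi_iff.mpr fun n => measurable_pi_apply (n + 1)
  have hE : ∀ i, MeasurableSet {ω : ℕ → I | (S i x, ω) ∈ D} :=
    fun i => measurable_prodMk_left hD
  have hfiber : ∀ i : I, MeasurableSet {ω : ℕ → I | ω 0 = i} := by
    intro i
    have : {ω : ℕ → I | ω 0 = i} = (fun ω : ℕ → I => ω 0) ⁻¹' {i} := rfl
    rw [this]
    exact measurable_pi_apply 0 (measurableSet_singleton i)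
  -- key measure identity
  have key : ∀ (i : I) (A : Set (ℕ → I)), MeasurableSet A →
      px x ({ω : ℕ → I | ω 0 = i} ∩ shift ⁻¹' A)
        = ENNReal.ofReal (p i x) * px (S i x) A := by
    intro i A hA
    haveI := hpxprob x
    haveI := hpxprob (S i x)
    have hmeq : ((px x).restrict {ω : ℕ → I | ω 0 = i}).map shift
        = ENNReal.ofReal (p i x) • px (S i x) := by
      refine ext_of_generate_finite {s : Set (ℕ → I) | ∃ l, s = _root_.cylinder l}
        generateFrom_cylinders cylinder_pi_system ?_ ?_
      · rintro s ⟨l, rfl⟩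
        rw [Measure.map_apply hshift (measurableSet_cylinder l),
          Measure.restrict_apply (hshift (measurableSet_cylinder l))]
        have hseteq : shift ⁻¹' _root_.cylinder l ∩ {ω : ℕ → I | ω 0 = i}
            = _root_.cylinder (i :: l) := by
          ext ω
          rw [mem_cylinder_cons]
          simp only [mem_inter_iff, mem_preimage, mem_setOf_eq]
          tauto
        rw [hseteq, hpxcyl x (i :: l), Measure.smul_apply, smul_eq_mul, hpxcyl (S i x) l]
        show ENNReal.ofReal (p i x * wtWord S p l (S i x)) = _
        rw [ENNReal.ofReal_mul (hp0 i x)]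
      · rw [Measure.map_apply hshift MeasurableSet.univ]
        simp only [preimage_univ, Measure.restrict_apply_univ, Measure.smul_apply,
          smul_eq_mul, measure_univ, mul_one]
        have : {ω : ℕ → I | ω 0 = i} = _root_.cylinder [i] := by
          ext ω
          simp only [mem_setOf_eq, _root_.cylinder]
          constructor
          · intro h k hk
            obtain rfl : k = 0 := Nat.lt_one_iff.mp (by simpa using hk)
            simpa using h
          · intro h; simpa using h 0 (by simp)
        rw [this, hpxcyl x [i]]
        show ENNReal.ofReal (p i x * wtWord S p [] (S i x)) = _
        simp [wtWord]
    have := congrArg (fun μ : Measure (ℕ → I) => μ A) hmeq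
    try simp only at this
    rw [Measure.map_apply hshift hA, Measure.restrict_apply (hshift hA),
      Measure.smul_apply, smul_eq_mul] at this
    rw [inter_comm]
    exact this
  -- decompose D_x
  have hDx : {ω : ℕ → I | (x, ω) ∈ D}
      = ⋃ i : I, ({ω : ℕ → I | ω 0 = i} ∩ shift ⁻¹' {ω | (S i x, ω) ∈ D}) := by
    ext ω
    simp only [mem_iUnion, mem_inter_iff, mem_setOf_eq, mem_preimage]
    constructor
    · intro h
      refine ⟨ω 0, rfl, ?_⟩
      rw [← hDinv] at h
      exact h
    · rintro ⟨i, h0, hA⟩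
      rw [← hDinv]
      show (S (ω 0) x, shift ω) ∈ D
      rw [h0]
      exact hA
  rw [hDx, measure_iUnion ?_ (fun i => (hfiber i).inter (hshift (hE i))), tsum_fintype]
  · exact Finset.sum_congr rfl fun i _ => (key i _ (hE i)).symm
  · intro i j hij
    refine (Disjoint.mono inter_subset_left inter_subset_left) ?_
    rw [disjoint_left]
    intro ω h1 h2
    exact hij (h1.symm.trans h2 : i = j)

/-- If `D ⊆ X × Σ` is a Borel set invariant under the skew product
`S(x,ω) = (S_{ω₁}(x), σω)` (i.e. `S⁻¹(D) = D`), then for every `x ∈ X`,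
`Σ_i p_i(x)·L_D(S_i(x)) = L_D(x)`, where `L_D(x) = p_x(D_x)`. -/
theorem stmt7 {X I : Type*} [MetricSpace X] [TopologicalSpace.SeparableSpace X]
    [MeasurableSpace X] [BorelSpace X]
    [Fintype I] [MeasurableSpace I] [MeasurableSingletonClass I]
    (S : I → X → X) (hS : ∀ i, Measurable (S i))
    (p : I → X → ℝ) (hp : ∀ i, Measurable (p i))
    (hp0 : ∀ i x, 0 ≤ p i x) (hp1 : ∀ x, ∑ i : I, p i x = 1)
    (px : X → Measure (ℕ → I)) (hpxprob : ∀ x, IsProbabilityMeasure (px x))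
    (hpxcyl : ∀ (x : X) (l : List I), px x (cylinder l) = ENNReal.ofReal (wtWord S p l x))
    (D : Set (X × (ℕ → I))) (hD : MeasurableSet D)
    (hDinv : (fun z : X × (ℕ → I) => (S (z.2 0) z.1, fun n => z.2 (n + 1))) ⁻¹' D = D) :
    ∀ x : X, ∑ i : I, ENNReal.ofReal (p i x) * px (S i x) {ω | (S i x, ω) ∈ D}
      = px x {ω | (x, ω) ∈ D} :=
  stmt7' S hS p hp hp0 hp1 px hpxprob hpxcyl D hD hDinv
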